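/- McMillan's Theorem: If C is a uniquely decipherable code over a finite nonempty alphabet A with r elements, then its Kraft sum satisfies K(C) ≤ 1. -/

import Mathlib

/-- A finite set `C` of strings over `A` is a uniquely decipherable code if the
concatenation map is injective on finite sequences of elements of `C`. -/
def UniquelyDecipherable {A : Type*} (C : Finset (List A)) : Prop :=
  ∀ u v : List (List A), (∀ x ∈ u, x ∈ C) → (∀ x ∈ v, x ∈ C) →
    u.flatten = v.flatten → u = v

/-- The Kraft sum `K(C) = Σ_{x ∈ C} r^{-len(x)}` where `r` is the size of the alphabet. -/
noncomputable def kraftSum {A : Type*} [Fintype A] (C : Finset (List A)) : ℝ :=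
  ∑ x ∈ C, (Fintype.card A : ℝ) ^ (-(x.length : ℤ))

/-- **McMillan's Theorem.** If `C` is a uniquely decipherable code over a finite nonempty
alphabet, then `K(C) ≤ 1`. -/
theorem mcmillan {A : Type*} [Fintype A] [Nonempty A]
    (C : Finset (List A)) (hC : UniquelyDecipherable C) :
    kraftSum C ≤ 1 := by
  classical
  set r : ℕ := Fintype.card A with hr
  have hr1 : 1 ≤ r := Fintype.card_pos
  have hrR : (1:ℝ) ≤ (r:ℝ) := by exact_mod_cast hr1
  have hrpos : (0:ℝ) < (r:ℝ) := by linarith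
  have hrne : (r:ℝ) ≠ 0 := ne_of_gt hrpos
  set m : ℕ := C.sup List.length with hmdef
  have hm : ∀ x ∈ C, x.length ≤ m := fun x hx => Finset.le_sup hx
  have hks : kraftSum C = ∑ x ∈ C, ((r:ℝ)⁻¹) ^ x.length := by
    unfold kraftSum
    refine Finset.sum_congr rfl fun x _ => ?_
    rw [zpow_neg, zpow_natCast, inv_pow]
  -- the length of the flatten of an ofFn
  have hlen : ∀ {n : ℕ} (g : Fin n → List A),
      ((List.ofFn g).flatten).length = ∑ i, (g i).length := by
    intro n g
    rw [List.length_flatten, List.map_ofFn, List.sum_ofFn]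
    rfl
  -- cardinality bound on fibers
  have card_le : ∀ (n ℓ : ℕ),
      ((Fintype.piFinset (fun _ : Fin n => C)).filter
        (fun g => ((List.ofFn g).flatten).length = ℓ)).card ≤ r ^ ℓ := by
    intro n ℓ
    have hinh : Inhabited (List.Vector A ℓ) :=
      ⟨List.Vector.replicate ℓ (Classical.arbitrary A)⟩
    set f : (Fin n → List A) → List.Vector A ℓ := fun g =>
      if h : ((List.ofFn g).flatten).length = ℓ then ⟨(List.ofFn g).flatten, h⟩
      else hinh.default with hf
    have := Finset.card_le_card_of_injOn
      (s := (Fintype.piFinset (fun _ : Fin n => C)).filter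
        (fun g => ((List.ofFn g).flatten).length = ℓ))
      (t := (Finset.univ : Finset (List.Vector A ℓ))) f
      (fun a _ => Finset.mem_univ _) ?_
    · simpa [card_vector] using this
    · intro g hg g' hg' hfe
      simp only [Finset.coe_filter, Set.mem_setOf_eq, Fintype.mem_piFinset] at hg hg'
      rw [hf] at hfe
      simp only [dif_pos hg.2, dif_pos hg'.2] at hfe
      have hflat : (List.ofFn g).flatten = (List.ofFn g').flatten :=
        by have h2 := congrArg Subtype.val hfe; simpa [hg.2, hg'.2] using h2
      have : List.ofFn g = List.ofFn g' := by
        apply hC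
        · intro x hx
          obtain ⟨i, rfl⟩ := List.mem_ofFn.mp hx
          exact hg.1 i
        · intro x hx
          obtain ⟨i, rfl⟩ := List.mem_ofFn.mp hx
          exact hg'.1 i
        · exact hflat
      exact List.ofFn_injective this
  -- the key bound
  have key : ∀ n : ℕ, kraftSum C ^ n ≤ (m : ℝ) * n + 1 := by
    intro n
    have expand : kraftSum C ^ n =
        ∑ g ∈ Fintype.piFinset (fun _ : Fin n => C),
          ((r:ℝ)⁻¹) ^ ((List.ofFn g).flatten).length := by
      rw [hks]
      calc (∑ x ∈ C, ((r:ℝ)⁻¹) ^ x.length) ^ n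
          = ∏ _i : Fin n, ∑ x ∈ C, ((r:ℝ)⁻¹) ^ x.length := by
            simp [Finset.prod_const]
        _ = ∑ g ∈ Fintype.piFinset (fun _ : Fin n => C),
              ∏ i, ((r:ℝ)⁻¹) ^ (g i).length := Finset.prod_univ_sum _ _
        _ = _ := by
            refine Finset.sum_congr rfl fun g _ => ?_
            rw [Finset.prod_pow_eq_pow_sum, hlen]
    have maps : ∀ g ∈ Fintype.piFinset (fun _ : Fin n => C),
        ((List.ofFn g).flatten).length ∈ Finset.range (m * n + 1) := by
      intro g hg
      rw [Finset.mem_range, Nat.lt_succ_iff, hlen]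
      calc ∑ i, (g i).length ≤ ∑ _i : Fin n, m :=
            Finset.sum_le_sum (fun i _ => hm _ (Fintype.mem_piFinset.mp hg i))
        _ = m * n := by simp [Finset.sum_const, Nat.mul_comm]
    rw [expand, ← Finset.sum_fiberwise_of_maps_to maps]
    have hbound : ∀ ℓ ∈ Finset.range (m * n + 1),
        (∑ g ∈ (Fintype.piFinset (fun _ : Fin n => C)).filter
          (fun g => ((List.ofFn g).flatten).length = ℓ),
          ((r:ℝ)⁻¹) ^ ((List.ofFn g).flatten).length) ≤ 1 := by
      intro ℓ _
      have : (∑ g ∈ (Fintype.piFinset (fun _ : Fin n => C)).filter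
          (fun g => ((List.ofFn g).flatten).length = ℓ),
          ((r:ℝ)⁻¹) ^ ((List.ofFn g).flatten).length)
          = (((Fintype.piFinset (fun _ : Fin n => C)).filter
          (fun g => ((List.ofFn g).flatten).length = ℓ)).card : ℝ) * ((r:ℝ)⁻¹) ^ ℓ := by
        rw [Finset.sum_congr rfl (fun g hg => by
          rw [(Finset.mem_filter.mp hg).2]), Finset.sum_const, nsmul_eq_mul]
      rw [this]
      calc (((Fintype.piFinset (fun _ : Fin n => C)).filter
            (fun g => ((List.ofFn g).flatten).length = ℓ)).card : ℝ) * ((r:ℝ)⁻¹) ^ ℓ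
          ≤ ((r:ℝ) ^ ℓ) * ((r:ℝ)⁻¹) ^ ℓ := by
            apply mul_le_mul_of_nonneg_right _ (by positivity)
            exact_mod_cast card_le n ℓ
        _ = 1 := by rw [← mul_pow, mul_inv_cancel₀ hrne, one_pow]
    calc (∑ ℓ ∈ Finset.range (m * n + 1), ∑ g ∈ (Fintype.piFinset (fun _ : Fin n => C)).filter
          (fun g => ((List.ofFn g).flatten).length = ℓ),
          ((r:ℝ)⁻¹) ^ ((List.ofFn g).flatten).length)
        ≤ ∑ _ℓ ∈ Finset.range (m * n + 1), (1:ℝ) := Finset.sum_le_sum hbound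
      _ = (m : ℝ) * n + 1 := by
        rw [Finset.sum_const, Finset.card_range, nsmul_eq_mul, mul_one]
        push_cast
        ring
  -- conclude
  by_contra hK
  push_neg at hK
  set ε : ℝ := kraftSum C - 1 with hε
  have hεpos : 0 < ε := by linarith
  obtain ⟨k, hk⟩ := exists_nat_gt ((2 * m + 1) / ε ^ 2)
  have hk1 : 1 ≤ (k:ℝ) := by
    have : (0:ℝ) ≤ (2 * m + 1) / ε ^ 2 := by positivity
    have : (0:ℝ) < k := by linarith
    exact_mod_cast Nat.one_le_iff_ne_zero.mpr (by exact_mod_cast this.ne')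
  have hkε : (2 * (m:ℝ) + 1) < k * ε ^ 2 := by
    rw [div_lt_iff₀ (by positivity)] at hk
    linarith [hk]
  have hbern : 1 + (k:ℝ) * ε ≤ kraftSum C ^ k := by
    have := one_add_mul_le_pow (a := ε) (by linarith) k
    simpa [hε] using this
  have hsq : ((1:ℝ) + k * ε) ^ 2 ≤ kraftSum C ^ (2 * k) := by
    rw [two_mul, pow_add]
    have h0 : (0:ℝ) ≤ 1 + (k:ℝ) * ε := by positivity
    calc ((1:ℝ) + k * ε) ^ 2 = (1 + (k:ℝ) * ε) * (1 + (k:ℝ) * ε) := sq _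
      _ ≤ kraftSum C ^ k * kraftSum C ^ k :=
        mul_le_mul hbern hbern h0 (le_trans h0 hbern)
  have hkey := key (2 * k)
  have hcast : ((2 * k : ℕ) : ℝ) = 2 * k := by push_cast; ring
  rw [hcast] at hkey
  nlinarith [hsq, hkey, hkε, hk1, hεpos, sq_nonneg ((k:ℝ) * ε)]
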